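/- arXiv:1903.07371 — 2 statements merged into one kernel-verified Lean document; each statement's English description precedes it below -/
import Mathlib

section
/- If T, T' are monotone operators on Pow(B) such that for every I ⊆ B, T(I) ⊆ T'(I) ⊆ T(I) ∪ H for a fixed finite set H ⊆ gfp(T), then gfp(T) = gfp(T'). -/
theorem stmt8 {B : Type*} (T T' : Set B →o Set B) (H : Set B) (hfin : H.Finite)
    (hH : H ⊆ OrderHom.gfp T)
    (h1 : ∀ I : Set B, T I ⊆ T' I) (h2 : ∀ I : Set B, T' I ⊆ T I ∪ H) :
    OrderHom.gfp T = OrderHom.gfp T' := by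
  apply le_antisymm
  · apply OrderHom.le_gfp
    nth_rewrite 1 [← OrderHom.map_gfp T]
    exact h1 _
  · -- show gfp T' ∪ gfp T is a postfixpoint of T
    have key : OrderHom.gfp T' ∪ OrderHom.gfp T ≤ T (OrderHom.gfp T' ∪ OrderHom.gfp T) := by
      apply Set.union_subset
      · have : OrderHom.gfp T' ⊆ T (OrderHom.gfp T') ∪ H := by
          conv_lhs => rw [← OrderHom.map_gfp T']
          exact h2 _
        intro x hx
        rcases this hx with h | h
        · exact T.monotone (Set.subset_union_left) h
        · have : x ∈ T (OrderHom.gfp T) := by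
            rw [OrderHom.map_gfp]; exact hH h
          exact T.monotone (Set.subset_union_right) this
      · conv_lhs => rw [← OrderHom.map_gfp T]
        exact T.monotone Set.subset_union_right
    have := OrderHom.le_gfp T key
    exact le_trans (Set.subset_union_left) this
end

section
/- β-reduction with fix treated as a constant is strongly normalizing on simply-typed terms: if all terms are well-typed in the simply-typed lambda calculus extended with a constant fix (where fix-unfolding is not counted as a β-step), then there is no infinite sequence of one-step β-reductions. -/
/-- Simple types. -/
inductive Ty : Type
  | base : Ty
  | arrow : Ty → Ty → Ty

/-- Lambda terms (de Bruijn) extended with fixed-point terms `fix λx.M`. -/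
inductive Tm : Type
  | var : ℕ → Tm
  | app : Tm → Tm → Tm
  | lam : Ty → Tm → Tm
  | fixl : Ty → Tm → Tm

def liftR (f : ℕ → ℕ) : ℕ → ℕ
  | 0 => 0
  | n + 1 => f n + 1

def rename (f : ℕ → ℕ) : Tm → Tm
  | .var n => .var (f n)
  | .app a b => .app (rename f a) (rename f b)
  | .lam τ b => .lam τ (rename (liftR f) b)
  | .fixl τ b => .fixl τ (rename (liftR f) b)

def liftS (σ : ℕ → Tm) : ℕ → Tm
  | 0 => .var 0
  | n + 1 => rename Nat.succ (σ n)

def substTm (σ : ℕ → Tm) : Tm → Tm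
  | .var n => σ n
  | .app a b => .app (substTm σ a) (substTm σ b)
  | .lam τ b => .lam τ (substTm (liftS σ) b)
  | .fixl τ b => .fixl τ (substTm (liftS σ) b)

/-- `subst1 N M` is `M[x := N]` for the outermost bound variable. -/
def subst1 (N M : Tm) : Tm :=
  substTm (fun n => match n with | 0 => N | n + 1 => .var n) M

/-- One-step β-reduction, closed under all term contexts (including under `fix`);
fix-unfolding is *not* a reduction step. -/
inductive Step : Tm → Tm → Prop
  | beta (τ : Ty) (M N : Tm) : Step (.app (.lam τ M) N) (subst1 N M)
  | appL {M M' : Tm} (N : Tm) : Step M M' → Step (.app M N) (.app M' N)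
  | appR (M : Tm) {N N' : Tm} : Step N N' → Step (.app M N) (.app M N')
  | lam (τ : Ty) {M M' : Tm} : Step M M' → Step (.lam τ M) (.lam τ M')
  | fixl (τ : Ty) {M M' : Tm} : Step M M' → Step (.fixl τ M) (.fixl τ M')

/-- Typing rules; `fix λx.M : τ` whenever `Γ, x:τ ⊢ M : τ`. -/
inductive HasType : List Ty → Tm → Ty → Prop
  | var {Γ : List Ty} {n : ℕ} {τ : Ty} : Γ[n]? = some τ → HasType Γ (.var n) τ
  | app {Γ : List Ty} {M N : Tm} {τ σ : Ty} :
      HasType Γ M (.arrow τ σ) → HasType Γ N τ → HasType Γ (.app M N) σ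
  | lam {Γ : List Ty} {M : Tm} {τ σ : Ty} :
      HasType (τ :: Γ) M σ → HasType Γ (.lam τ M) (.arrow τ σ)
  | fixl {Γ : List Ty} {M : Tm} {τ : Ty} :
      HasType (τ :: Γ) M τ → HasType Γ (.fixl τ M) τ

/- ===== auxiliary development ===== -/

def SN (t : Tm) : Prop := Acc (fun a b => Step b a) t

def consS (N : Tm) (s : ℕ → Tm) : ℕ → Tm
  | 0 => N
  | n + 1 => s n

lemma substTm_congr {s1 s2 : ℕ → Tm} (h : ∀ n, s1 n = s2 n) (M : Tm) :
    substTm s1 M = substTm s2 M := by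
  have : s1 = s2 := funext h
  rw [this]

lemma liftR_comp (f g : ℕ → ℕ) : liftR (f ∘ g) = liftR f ∘ liftR g := by
  funext n; cases n <;> rfl

lemma rename_rename (M : Tm) : ∀ f g, rename f (rename g M) = rename (f ∘ g) M := by
  induction M with
  | var n => intro f g; rfl
  | app a b iha ihb => intro f g; simp [rename, iha, ihb]
  | lam τ b ih => intro f g; simp [rename, liftR_comp, ih]
  | fixl τ b ih => intro f g; simp [rename, liftR_comp, ih]

lemma liftS_rename (s : ℕ → Tm) (f : ℕ → ℕ) :
    ∀ n, liftS (fun m => s (f m)) n = liftS s (liftR f n) := by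
  intro n; cases n <;> rfl

lemma substTm_rename (M : Tm) : ∀ (s : ℕ → Tm) (f : ℕ → ℕ),
    substTm s (rename f M) = substTm (fun n => s (f n)) M := by
  induction M with
  | var n => intro s f; rfl
  | app a b iha ihb => intro s f; simp [rename, substTm, iha, ihb]
  | lam τ b ih => intro s f; simp [rename, substTm, ih]; exact (substTm_congr (liftS_rename s f) b).symm
  | fixl τ b ih => intro s f; simp [rename, substTm, ih]; exact (substTm_congr (liftS_rename s f) b).symm

lemma liftS_rename' (s : ℕ → Tm) (f : ℕ → ℕ) :
    ∀ n, liftS (fun m => rename f (s m)) n = rename (liftR f) (liftS s n) := by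
  intro n
  cases n with
  | zero => rfl
  | succ n =>
    show rename Nat.succ (rename f (s n)) = rename (liftR f) (rename Nat.succ (s n))
    rw [rename_rename, rename_rename]
    rfl

lemma rename_substTm (M : Tm) : ∀ (f : ℕ → ℕ) (s : ℕ → Tm),
    rename f (substTm s M) = substTm (fun n => rename f (s n)) M := by
  induction M with
  | var n => intro f s; rfl
  | app a b iha ihb => intro f s; simp [rename, substTm, iha, ihb]
  | lam τ b ih => intro f s; simp [rename, substTm, ih]; exact (substTm_congr (liftS_rename' s f) b).symm
  | fixl τ b ih => intro f s; simp [rename, substTm, ih]; exact (substTm_congr (liftS_rename' s f) b).symm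

lemma liftS_substTm (s1 s2 : ℕ → Tm) :
    ∀ n, liftS (fun m => substTm s1 (s2 m)) n = substTm (liftS s1) (liftS s2 n) := by
  intro n
  cases n with
  | zero => rfl
  | succ n =>
    show rename Nat.succ (substTm s1 (s2 n)) = substTm (liftS s1) (rename Nat.succ (s2 n))
    rw [rename_substTm, substTm_rename]
    rfl

lemma substTm_substTm (M : Tm) : ∀ (s1 s2 : ℕ → Tm),
    substTm s1 (substTm s2 M) = substTm (fun n => substTm s1 (s2 n)) M := by
  induction M with
  | var n => intro s1 s2; rfl
  | app a b iha ihb => intro s1 s2; simp [substTm, iha, ihb]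
  | lam τ b ih => intro s1 s2; simp [substTm, ih]; exact (substTm_congr (liftS_substTm s1 s2) b).symm
  | fixl τ b ih => intro s1 s2; simp [substTm, ih]; exact (substTm_congr (liftS_substTm s1 s2) b).symm

lemma liftS_var : ∀ n, liftS Tm.var n = Tm.var n := by
  intro n; cases n <;> rfl

lemma substTm_var (M : Tm) : substTm Tm.var M = M := by
  induction M with
  | var n => rfl
  | app a b iha ihb => simp [substTm, iha, ihb]
  | lam τ b ih => simp [substTm]; rw [substTm_congr liftS_var b, ih]
  | fixl τ b ih => simp [substTm]; rw [substTm_congr liftS_var b, ih]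

lemma subst1_eq (N M : Tm) : subst1 N M = substTm (consS N Tm.var) M := by
  unfold subst1
  exact substTm_congr (fun n => by cases n <;> rfl) M

/-- `(M[x:=N])[s] = M[liftS s][x := N[s]]` (read right-to-left). -/
lemma substTm_subst1 (s : ℕ → Tm) (N M : Tm) :
    substTm s (subst1 N M) = subst1 (substTm s N) (substTm (liftS s) M) := by
  rw [subst1_eq, subst1_eq, substTm_substTm, substTm_substTm]
  apply substTm_congr
  intro n
  cases n with
  | zero => rfl
  | succ n =>
    show substTm s (Tm.var n) = substTm (consS (substTm s N) Tm.var) (rename Nat.succ (s n))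
    rw [substTm_rename]
    show s n = substTm (fun m => Tm.var m) (s n)
    rw [show (fun m => Tm.var m) = Tm.var from rfl, substTm_var]

lemma subst1_substTm_lift (N : Tm) (s : ℕ → Tm) (M : Tm) :
    subst1 N (substTm (liftS s) M) = substTm (consS N s) M := by
  rw [subst1_eq, substTm_substTm]
  apply substTm_congr
  intro n
  cases n with
  | zero => rfl
  | succ n =>
    show substTm (consS N Tm.var) (rename Nat.succ (s n)) = s n
    rw [substTm_rename]
    show substTm (fun m => Tm.var m) (s n) = s n
    rw [show (fun m => Tm.var m) = Tm.var from rfl, substTm_var]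

lemma step_subst (s : ℕ → Tm) {M M' : Tm} (h : Step M M') :
    Step (substTm s M) (substTm s M') := by
  induction h generalizing s with
  | beta τ B N =>
    rw [substTm_subst1]
    exact Step.beta τ (substTm (liftS s) B) (substTm s N)
  | appL N _ ih => exact Step.appL _ (ih s)
  | appR M _ ih => exact Step.appR _ (ih s)
  | lam τ _ ih => exact Step.lam τ (ih (liftS s))
  | fixl τ _ ih => exact Step.fixl τ (ih (liftS s))

lemma sn_of_image (F : Tm → Tm) (hF : ∀ a b, Step a b → Step (F a) (F b))
    {M : Tm} (h : SN (F M)) : SN M := by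
  have key : ∀ t, SN t → ∀ M, F M = t → SN M := by
    intro t ht
    induction ht with
    | intro t _ ih =>
      intro M hM
      subst hM
      exact Acc.intro M fun y hy => ih (F y) (hF _ _ hy) y rfl
  exact key _ h M rfl

lemma sn_app_left {M N : Tm} (h : SN (Tm.app M N)) : SN M :=
  sn_of_image (fun t => Tm.app t N) (fun _ _ hs => Step.appL N hs) h

/-- Reducibility predicate. -/
def Red : Ty → Tm → Prop
  | .base, M => SN M
  | .arrow τ σ, M => ∀ N, Red τ N → Red σ (Tm.app M N)

def Neutral : Tm → Prop
  | .lam _ _ => False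
  | _ => True

lemma CR (τ : Ty) :
    (∀ M, Red τ M → SN M) ∧ (∀ M M', Red τ M → Step M M' → Red τ M') ∧
    (∀ M, Neutral M → (∀ M', Step M M' → Red τ M') → Red τ M) := by
  induction τ with
  | base =>
    refine ⟨fun M h => h, fun M M' h hs => h.inv hs, fun M _ h => Acc.intro M h⟩
  | arrow τ σ ihτ ihσ =>
    obtain ⟨cr1τ, cr2τ, cr3τ⟩ := ihτ
    obtain ⟨cr1σ, cr2σ, cr3σ⟩ := ihσ
    have redvar : ∀ n, Red τ (Tm.var n) := by
      intro n
      exact cr3τ _ trivial (fun M' h => by cases h)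
    refine ⟨?_, ?_, ?_⟩
    · intro M hM
      have h1 : Red σ (Tm.app M (Tm.var 0)) := hM _ (redvar 0)
      exact sn_app_left (cr1σ _ h1)
    · intro M M' hM hs N hN
      exact cr2σ _ _ (hM N hN) (Step.appL N hs)
    · intro M hne h N hN
      have key : ∀ N, SN N → Red τ N → Red σ (Tm.app M N) := by
        intro N hSN
        induction hSN with
        | intro N hN' ih =>
          intro hRN
          apply cr3σ (Tm.app M N) trivial
          intro P hP
          cases hP with
          | beta τ' B _ => exact False.elim hne
          | appL _ hM' => exact h _ hM' N hRN
          | appR _ hN'' => exact ih _ hN'' (cr2τ _ _ hRN hN'')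
      exact key N (cr1τ N hN) hN

lemma red_var (τ : Ty) (n : ℕ) : Red τ (Tm.var n) :=
  (CR τ).2.2 _ trivial (fun M' h => by cases h)

lemma red_fixl (τ : Ty) {B : Tm} (h : SN B) : Red τ (Tm.fixl τ B) := by
  induction h with
  | intro B _ ih =>
    apply (CR τ).2.2 (Tm.fixl τ B) trivial
    intro P hP
    cases hP with
    | fixl _ h' => exact ih _ h'

lemma red_beta (τ σ : Ty) :
    ∀ B, SN B → ∀ N, SN N → (∀ N', Red τ N' → Red σ (subst1 N' B)) → Red τ N →
      Red σ (Tm.app (Tm.lam τ B) N) := by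
  intro B hB
  induction hB with
  | intro B hB' ihB =>
    intro N hN
    induction hN with
    | intro N hN' ihN =>
      intro hsub hRN
      apply (CR σ).2.2 (Tm.app (Tm.lam τ B) N) trivial
      intro P hP
      cases hP with
      | beta => exact hsub N hRN
      | appL _ hM' =>
        cases hM' with
        | lam _ hB'' =>
          exact ihB _ hB'' N (Acc.intro N hN')
            (fun N' hN'R => (CR σ).2.1 _ _ (hsub N' hN'R) (step_subst _ hB'')) hRN
      | appR _ hN'' =>
        exact ihN _ hN'' hsub ((CR τ).2.1 _ _ hRN hN'')

def RedSub (Γ : List Ty) (s : ℕ → Tm) : Prop :=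
  ∀ n τ, Γ[n]? = some τ → Red τ (s n)

lemma redsub_cons {Γ : List Ty} {s : ℕ → Tm} {τ : Ty} {N : Tm}
    (hN : Red τ N) (hs : RedSub Γ s) : RedSub (τ :: Γ) (consS N s) := by
  intro n τ' h
  cases n with
  | zero => simp at h; subst h; exact hN
  | succ n => exact hs n τ' (by simpa using h)

lemma red_main {Γ : List Ty} {M : Tm} {τ : Ty} (h : HasType Γ M τ) :
    ∀ s, RedSub Γ s → Red τ (substTm s M) := by
  induction h with
  | var h => intro s hs; exact hs _ _ h
  | app hM hN ihM ihN => intro s hs; exact ihM s hs _ (ihN s hs)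
  | @lam Γ M τ σ hM ih =>
    intro s hs
    show Red (.arrow τ σ) (Tm.lam τ (substTm (liftS s) M))
    intro N hN
    have hsub : ∀ N', Red τ N' → Red σ (subst1 N' (substTm (liftS s) M)) := by
      intro N' hN'
      rw [subst1_substTm_lift]
      exact ih (consS N' s) (redsub_cons hN' hs)
    have hSNB : SN (substTm (liftS s) M) := by
      apply sn_of_image (subst1 (Tm.var 0)) (fun a b hab => by
        rw [subst1_eq, subst1_eq]; exact step_subst _ hab)
      exact (CR σ).1 _ (hsub _ (red_var τ 0))
    exact red_beta τ σ _ hSNB N ((CR τ).1 _ hN) hsub hN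
  | @fixl Γ M τ hM ih =>
    intro s hs
    apply red_fixl
    apply sn_of_image (subst1 (Tm.var 0)) (fun a b hab => by
      rw [subst1_eq, subst1_eq]; exact step_subst _ hab)
    apply (CR τ).1
    rw [subst1_substTm_lift]
    exact ih (consS (Tm.var 0) s) (redsub_cons (red_var τ 0) hs)

lemma sn_no_infinite {M : Tm} (hsn : SN M) :
    ¬ ∃ f : ℕ → Tm, f 0 = M ∧ ∀ n : ℕ, Step (f n) (f (n + 1)) := by
  rintro ⟨f, hf0, hstep⟩
  have key : ∀ t, SN t → ∀ f : ℕ → Tm, f 0 = t → (∀ n, Step (f n) (f (n + 1))) → False := by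
    intro t ht
    induction ht with
    | intro t _ ih =>
      intro f hf0 hstep
      exact ih (f 1) (hf0 ▸ hstep 0) (fun n => f (n + 1)) rfl (fun n => hstep (n + 1))
  exact key M hsn f hf0 hstep


theorem stmt16 (Γ : List Ty) (M : Tm) (τ : Ty) (h : HasType Γ M τ) :
    ¬ ∃ f : ℕ → Tm, f 0 = M ∧ ∀ n : ℕ, Step (f n) (f (n + 1)) := by
  apply sn_no_infinite
  have h1 := red_main h Tm.var (fun n τ' h' => red_var τ' n)
  rw [substTm_var] at h1
  exact (CR τ).1 _ h1
end
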